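/- Let A be a nonzero commutative ring, R = \prod_{i \geq 1} A the countably infinite product, and I = \bigoplus_{i \geq 1} A the ideal of eventually-zero sequences. Then R/I is a flat R-module but not a projective R-module. -/

import Mathlib

/-- The ideal of eventually zero sequences in a countably infinite product ring. -/
def eventuallyZeroIdeal (A : Type*) [CommRing A] : Ideal (ℕ → A) where
  carrier := {x | (Function.support x).Finite}
  zero_mem' := by simp [Function.support_zero]
  add_mem' := by
    intro a b ha hb
    exact ((ha.union hb).subset (Function.support_add a b))
  smul_mem' := by
    intro c x hx
    exact hx.subset (Function.support_smul_subset_right c x)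

set_option linter.unusedSectionVars false

lemma mem_eZI {A : Type*} [CommRing A] {x : ℕ → A} :
    x ∈ eventuallyZeroIdeal A ↔ (Function.support x).Finite := Iff.rfl

section
variable (A : Type*) [CommRing A] [Nontrivial A]

lemma flat_part : Module.Flat (ℕ → A) ((ℕ → A) ⧸ eventuallyZeroIdeal A) := by
  rw [Module.Flat.iff_forall_isTrivialRelation]
  intro ι f x hfx
  -- lift x
  choose g hg using fun i => Ideal.Quotient.mk_surjective (I := eventuallyZeroIdeal A) (x i)
  set s : ℕ → A := ∑ i, f i * g i with hs
  have hsI : s ∈ eventuallyZeroIdeal A := by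
    rw [← Ideal.Quotient.eq_zero_iff_mem]
    have : Ideal.Quotient.mk (eventuallyZeroIdeal A) s = ∑ i, f i • x i := by
      simp [hs, map_sum, ← hg, Ideal.Quotient.mk_eq_mk, smul_eq_mul]
      rfl
    rw [this, hfx]
  -- indicator of support of s
  classical
  set e : ℕ → A := fun n => if n ∈ Function.support s then 1 else 0 with he
  have heI : e ∈ eventuallyZeroIdeal A := by
    refine hsI.subset ?_
    intro n hn
    rw [Function.mem_support] at hn ⊢
    intro h0
    exact hn (by simp [he, Function.mem_support, h0])
  have hse : s * e = s := by
    funext n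
    show s n * e n = s n
    by_cases h : s n = 0
    · simp [h]
    · have h1 : e n = 1 := if_pos (by simpa [Function.mem_support] using h)
      rw [h1, mul_one]
  refine ⟨1, fun i _ => g i * (1 - e), fun _ => Ideal.Quotient.mk _ 1, ?_, ?_⟩
  · intro i
    rw [Finset.sum_const, Finset.card_univ]
    simp only [Fintype.card_fin, one_smul]
    rw [← hg i]
    have : (g i * (1 - e)) • Ideal.Quotient.mk (eventuallyZeroIdeal A) (1 : ℕ → A)
        = Ideal.Quotient.mk (eventuallyZeroIdeal A) (g i * (1 - e)) := by
      rw [← Ideal.Quotient.mk_eq_mk, ← Submodule.Quotient.mk_smul, smul_eq_mul, mul_one,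
        Ideal.Quotient.mk_eq_mk]
    rw [this, Ideal.Quotient.eq]
    have : g i - g i * (1 - e) = g i * e := by ring
    rw [this]
    exact Ideal.mul_mem_left _ _ heI
  · intro j
    have : ∑ i, f i * (g i * (1 - e)) = s * (1 - e) := by
      rw [hs, Finset.sum_mul]
      congr 1; funext i; ring
    rw [this, mul_sub, hse, mul_one, sub_self]

lemma not_proj_part : ¬ Module.Projective (ℕ → A) ((ℕ → A) ⧸ eventuallyZeroIdeal A) := by
  intro hP
  obtain ⟨σ, hσ⟩ := Module.projective_lifting_property
    (eventuallyZeroIdeal A).mkQ LinearMap.id (Submodule.mkQ_surjective _)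
  set c : ℕ → A := σ (Submodule.mkQ _ 1) with hc
  have hc0 : ∀ n, c n = 0 := by
    intro n
    have hδ : (Pi.single n 1 : ℕ → A) ∈ eventuallyZeroIdeal A := by
      rw [mem_eZI]
      exact (Set.finite_singleton n).subset (Function.support_subset_iff'.2
        (fun m hm => Pi.single_eq_of_ne (by simpa using hm) 1))
    have : (Pi.single n 1 : ℕ → A) • σ ((eventuallyZeroIdeal A).mkQ 1) = 0 := by
      rw [← map_smul, ← map_smul]
      have : (Pi.single n 1 : ℕ → A) • (1 : ℕ → A) = Pi.single n 1 := by
        simp [smul_eq_mul]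
      rw [this, show ((eventuallyZeroIdeal A).mkQ) (Pi.single n 1 : ℕ → A) = 0 from
        (Submodule.Quotient.mk_eq_zero _).2 hδ, map_zero]
    have h2 := congrFun this n
    simpa [smul_eq_mul, hc] using h2
  have h1 : (1 : ℕ → A) - c ∈ eventuallyZeroIdeal A := by
    rw [← Submodule.Quotient.mk_eq_zero]
    have : Submodule.Quotient.mk ((1 : ℕ → A) - c) =
        (eventuallyZeroIdeal A).mkQ 1 - (eventuallyZeroIdeal A).mkQ c := by
      simp [Submodule.mkQ_apply, Submodule.Quotient.mk_sub]
    rw [this, hc]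
    have := LinearMap.congr_fun hσ ((eventuallyZeroIdeal A).mkQ 1)
    simp only [LinearMap.coe_comp, Function.comp_apply, LinearMap.id_apply] at this
    rw [this, sub_self]
  have : (1 : ℕ → A) - c = 1 := by
    funext n; simp [hc0 n]
  rw [this, mem_eZI] at h1
  have : Function.support (1 : ℕ → A) = Set.univ := by
    ext n; simp [Function.mem_support]
  rw [this] at h1
  exact Set.infinite_univ h1

end


/-- For `R` a countably infinite product of copies of a nonzero ring `A` and `I`
the ideal of eventually zero sequences, `R/I` is flat but not projective. -/
theorem quotient_flat_not_projective
    (A : Type*) [CommRing A] [Nontrivial A] :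
    Module.Flat (ℕ → A) ((ℕ → A) ⧸ eventuallyZeroIdeal A) ∧
      ¬ Module.Projective (ℕ → A) ((ℕ → A) ⧸ eventuallyZeroIdeal A) :=
  ⟨flat_part A, not_proj_part A⟩
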